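/- Fix β ∈ ℝ. Let r = r(m₁,m₂,m₃,m₄) be a nonzero r-matrix for the Lie superalgebra (C⁵₀+A) whose associated R-operator with respect to Ω_β satisfies the (modified) graded classical Yang–Baxter equation with some parameter ω ∈ ℝ. Then r is equivalent to one of the five representative r-matrices: r_i, r_ii, r_iii, r_iv(p) for some p ≠ 0, or r_v. (Theorem 6.1, existence part.) -/

import Mathlib

noncomputable section

/-- The underlying supervector space `V = ℝ⁴`, with basis `T 0, T 1` even and `T 2, T 3` odd
(corresponding to `T₁, T₂; T₃, T₄`). -/
abbrev V4 : Type := Fin 4 → ℝ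

/-- The basis vectors `T₁, T₂, T₃, T₄` (zero-indexed). -/
def T (i : Fin 4) : V4 := Pi.single i 1

/-- The bilinear bracket of the Lie superalgebra `(C⁵₀+A)`, determined by
`[T₁,T₃] = −T₄`, `[T₃,T₁] = T₄`, `[T₁,T₄] = T₃`, `[T₄,T₁] = −T₃`,
`[T₃,T₃] = T₂`, `[T₄,T₄] = T₂`, all other brackets of basis vectors zero. -/
def brC5 (x y : V4) : V4 :=
  ![0, x 2 * y 2 + x 3 * y 3, x 0 * y 3 - x 3 * y 0, -(x 0 * y 2) + x 2 * y 0]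

/-- The even subspace `span{T₁,T₂}`. -/
def spanEven : Submodule ℝ V4 := Submodule.span ℝ {T 0, T 1}

/-- The odd subspace `span{T₃,T₄}`. -/
def spanOdd : Submodule ℝ V4 := Submodule.span ℝ {T 2, T 3}

/-- The general even super skew-symmetric r-matrix
`r(m₁,m₂,m₃,m₄) = m₁(T₁⊗T₂ − T₂⊗T₁) + m₂(T₃⊗T₄ + T₄⊗T₃) + m₃ T₃⊗T₃ + m₄ T₄⊗T₄ ∈ V⊗V`,
recorded by its coefficient matrix `r^{ab}`. -/
def rmat (m₁ m₂ m₃ m₄ : ℝ) : Matrix (Fin 4) (Fin 4) ℝ :=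
  !![0, m₁, 0, 0; -m₁, 0, 0, 0; 0, 0, m₃, m₂; 0, 0, m₂, m₄]

/-- The R-operator of `r(m₁,m₂,m₃,m₄)` with respect to `Ω_β`:
`R(T₁) = m₁T₁ − βm₁T₂`, `R(T₂) = −m₁T₂`, `R(T₃) = m₂T₃ + m₄T₄`, `R(T₄) = −m₃T₃ − m₂T₄`. -/
def Rop (β m₁ m₂ m₃ m₄ : ℝ) : V4 →ₗ[ℝ] V4 :=
  Matrix.toLin' !![m₁, 0, 0, 0; -(β*m₁), -m₁, 0, 0; 0, 0, m₂, -m₃; 0, 0, m₄, -m₂]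

/-- `R` satisfies the (modified) graded classical Yang–Baxter equation with parameter `ω`. -/
def SatGCYBE (R : V4 →ₗ[ℝ] V4) (ω : ℝ) : Prop :=
  ∀ x y : V4, brC5 (R x) (R y) - R (brC5 (R x) y + brC5 x (R y)) = ω • brC5 x y

/-- An automorphism of `(C⁵₀+A)`: a linear bijection preserving the parity subspaces and
the bracket. -/
def IsAuto (A : V4 →ₗ[ℝ] V4) : Prop :=
  Function.Bijective A ∧
  (∀ x ∈ spanEven, A x ∈ spanEven) ∧
  (∀ x ∈ spanOdd, A x ∈ spanOdd) ∧
  (∀ x y : V4, A (brC5 x y) = brC5 (A x) (A y))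

/-- `(A⊗A)` applied to an r-matrix in coefficient form:
`((A⊗A)r)^{cd} = Σ_{a,b} r^{ab} (A T_a)^c (A T_b)^d`. -/
def applyAA (A : V4 →ₗ[ℝ] V4) (r : Matrix (Fin 4) (Fin 4) ℝ) : Matrix (Fin 4) (Fin 4) ℝ :=
  Matrix.of fun c d => ∑ a : Fin 4, ∑ b : Fin 4, r a b * A (T a) c * A (T b) d

/-- Equivalence of r-matrices: `r ~ r′` iff `(A⊗A)(r′) = r` for some automorphism `A`. -/
def REquiv (r r' : Matrix (Fin 4) (Fin 4) ℝ) : Prop :=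
  ∃ A : V4 →ₗ[ℝ] V4, IsAuto A ∧ applyAA A r' = r

/-! ### Auxiliary infrastructure -/

set_option linter.unnecessarySeqFocus false

lemma Rop_apply (β m₁ m₂ m₃ m₄ : ℝ) (x : V4) :
    Rop β m₁ m₂ m₃ m₄ x =
    ![m₁ * x 0, -(β*m₁) * x 0 - m₁ * x 1, m₂ * x 2 - m₃ * x 3, m₄ * x 2 - m₂ * x 3] := by
  funext i
  fin_cases i <;>
    simp [Rop, Matrix.toLin'_apply, Matrix.mulVec, dotProduct, Fin.sum_univ_four] <;> ring

/-- The family of automorphism matrices used in the classification. -/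
def Mauto (a p q : ℝ) : Matrix (Fin 4) (Fin 4) ℝ :=
  !![a, 0, 0, 0; 0, p^2+q^2, 0, 0; 0, 0, p, -(a*q); 0, 0, q, a*p]

/-- Inverse of `Mauto`. -/
def Minv (a p q : ℝ) : Matrix (Fin 4) (Fin 4) ℝ :=
  !![a, 0, 0, 0; 0, (p^2+q^2)⁻¹, 0, 0;
     0, 0, p/(p^2+q^2), q/(p^2+q^2); 0, 0, -(a*q)/(p^2+q^2), a*p/(p^2+q^2)]

lemma Mauto_mul_Minv (a p q : ℝ) (ha : a = 1 ∨ a = -1) (hd : p^2+q^2 ≠ 0) :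
    Mauto a p q * Minv a p q = 1 := by
  rcases ha with ha | ha <;> subst ha <;> ext i j <;>
  fin_cases i <;> fin_cases j <;>
    simp [Mauto, Minv, Matrix.mul_apply, Fin.sum_univ_four, Matrix.one_apply,
      Matrix.vecHead, Matrix.vecTail] <;>
    field_simp <;> ring

lemma Minv_mul_Mauto (a p q : ℝ) (ha : a = 1 ∨ a = -1) (hd : p^2+q^2 ≠ 0) :
    Minv a p q * Mauto a p q = 1 := by
  rcases ha with ha | ha <;> subst ha <;> ext i j <;>
  fin_cases i <;> fin_cases j <;>
    simp [Mauto, Minv, Matrix.mul_apply, Fin.sum_univ_four, Matrix.one_apply,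
      Matrix.vecHead, Matrix.vecTail] <;>
    field_simp <;> ring

lemma Mauto_apply (a p q : ℝ) (x : V4) :
    Matrix.toLin' (Mauto a p q) x =
    ![a * x 0, (p^2+q^2) * x 1, p * x 2 - a*q * x 3, q * x 2 + a*p * x 3] := by
  funext i
  fin_cases i <;>
    simp [Mauto, Matrix.toLin'_apply, Matrix.mulVec, dotProduct, Fin.sum_univ_four] <;> ring

lemma T_apply (i j : Fin 4) : T i j = if j = i then 1 else 0 := by
  simp [T, Pi.single_apply]

lemma isAuto_Mauto (a p q : ℝ) (ha : a = 1 ∨ a = -1) (hd : p^2+q^2 ≠ 0) :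
    IsAuto (Matrix.toLin' (Mauto a p q)) := by
  refine ⟨?_, ?_, ?_, ?_⟩
  · rw [Function.bijective_iff_has_inverse]
    have h1 : (Matrix.toLin' (Minv a p q)).comp (Matrix.toLin' (Mauto a p q)) = LinearMap.id := by
      rw [← Matrix.toLin'_mul, Minv_mul_Mauto a p q ha hd, Matrix.toLin'_one]
    have h2 : (Matrix.toLin' (Mauto a p q)).comp (Matrix.toLin' (Minv a p q)) = LinearMap.id := by
      rw [← Matrix.toLin'_mul, Mauto_mul_Minv a p q ha hd, Matrix.toLin'_one]
    refine ⟨Matrix.toLin' (Minv a p q), fun x => ?_, fun x => ?_⟩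
    · simpa using LinearMap.congr_fun h1 x
    · simpa using LinearMap.congr_fun h2 x
  · intro x hx
    induction hx using Submodule.span_induction with
    | mem z hz =>
      rcases hz with hz | hz <;> subst hz
      · have : Matrix.toLin' (Mauto a p q) (T 0) = a • T 0 := by
          rw [Mauto_apply]; funext i; fin_cases i <;> simp [T_apply]
        rw [this]
        exact Submodule.smul_mem _ _ (Submodule.subset_span (by simp))
      · have : Matrix.toLin' (Mauto a p q) (T 1) = (p^2+q^2) • T 1 := by
          rw [Mauto_apply]; funext i; fin_cases i <;> simp [T_apply]
        rw [this]
        exact Submodule.smul_mem _ _ (Submodule.subset_span (by simp))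
    | zero => simp
    | add x y _ _ hx hy => rw [map_add]; exact Submodule.add_mem _ hx hy
    | smul c x _ hx => rw [map_smul]; exact Submodule.smul_mem _ _ hx
  · intro x hx
    induction hx using Submodule.span_induction with
    | mem z hz =>
      rcases hz with hz | hz <;> subst hz
      · have : Matrix.toLin' (Mauto a p q) (T 2) = p • T 2 + q • T 3 := by
          rw [Mauto_apply]; funext i; fin_cases i <;> simp [T_apply]
        rw [this]
        exact Submodule.add_mem _
          (Submodule.smul_mem _ _ (Submodule.subset_span (by simp)))
          (Submodule.smul_mem _ _ (Submodule.subset_span (by simp)))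
      · have : Matrix.toLin' (Mauto a p q) (T 3) = (-(a*q)) • T 2 + (a*p) • T 3 := by
          rw [Mauto_apply]; funext i; fin_cases i <;> simp [T_apply]
        rw [this]
        exact Submodule.add_mem _
          (Submodule.smul_mem _ _ (Submodule.subset_span (by simp)))
          (Submodule.smul_mem _ _ (Submodule.subset_span (by simp)))
    | zero => simp
    | add x y _ _ hx hy => rw [map_add]; exact Submodule.add_mem _ hx hy
    | smul c x _ hx => rw [map_smul]; exact Submodule.smul_mem _ _ hx
  · intro x y
    rcases ha with ha | ha <;> subst ha <;>
      · simp only [brC5, Mauto_apply]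
        funext i; fin_cases i <;> simp <;> ring

lemma applyAA_toLin' (M : Matrix (Fin 4) (Fin 4) ℝ) (r : Matrix (Fin 4) (Fin 4) ℝ) :
    applyAA (Matrix.toLin' M) r = M * r * M.transpose := by
  ext c d
  simp only [applyAA, Matrix.of_apply, Matrix.toLin'_apply, T, Matrix.mulVec_single,
    Matrix.mul_apply, Matrix.transpose_apply, Finset.sum_mul]
  rw [Finset.sum_comm]
  refine Finset.sum_congr rfl fun a _ => Finset.sum_congr rfl fun b _ => by simp only [MulOpposite.op_one, one_smul, Matrix.col, Matrix.transpose_apply]; ring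

set_option maxHeartbeats 1000000 in
lemma Mauto_conj (a p q m₁ m₂ m₃ m₄ : ℝ) :
    Mauto a p q * rmat m₁ m₂ m₃ m₄ * (Mauto a p q).transpose =
    rmat (a*(p^2+q^2)*m₁)
         (p*q*m₃ + a*(p^2-q^2)*m₂ - a^2*p*q*m₄)
         (p^2*m₃ - 2*a*p*q*m₂ + a^2*q^2*m₄)
         (q^2*m₃ + 2*a*p*q*m₂ + a^2*p^2*m₄) := by
  ext i j
  fin_cases i <;> fin_cases j <;>
    simp [Mauto, rmat, Matrix.mul_apply, Fin.sum_univ_four,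
      Matrix.vecHead, Matrix.vecTail] <;> ring

lemma requiv_of (a p q m₁' m₂' m₃' m₄' m₁ m₂ m₃ m₄ : ℝ)
    (ha : a = 1 ∨ a = -1) (hd : p^2+q^2 ≠ 0)
    (h1 : a*(p^2+q^2)*m₁' = m₁)
    (h2 : p*q*m₃' + a*(p^2-q^2)*m₂' - a^2*p*q*m₄' = m₂)
    (h3 : p^2*m₃' - 2*a*p*q*m₂' + a^2*q^2*m₄' = m₃)
    (h4 : q^2*m₃' + 2*a*p*q*m₂' + a^2*p^2*m₄' = m₄) :
    REquiv (rmat m₁ m₂ m₃ m₄) (rmat m₁' m₂' m₃' m₄') := by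
  refine ⟨Matrix.toLin' (Mauto a p q), isAuto_Mauto a p q ha hd, ?_⟩
  rw [applyAA_toLin', Mauto_conj, h1, h2, h3, h4]

lemma rmat_zero : rmat 0 0 0 0 = 0 := by
  ext i j
  fin_cases i <;> fin_cases j <;> simp [rmat, Matrix.vecHead, Matrix.vecTail]

/-- **Theorem 6.1 (existence part).** Fix `β ∈ ℝ`. Any nonzero r-matrix `r(m₁,m₂,m₃,m₄)` of
`(C⁵₀+A)` whose associated R-operator with respect to `Ω_β` satisfies the (modified) graded
classical Yang–Baxter equation with some parameter `ω` is equivalent to one of the five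
representatives `r_i = r(1,0,0,0)`, `r_ii = r(0,0,1,1)`, `r_iii = r(0,0,−1,−1)`,
`r_iv(p) = r(1,0,p,p)` for some `p ≠ 0`, or `r_v = r(0,1,0,0)`. -/
theorem rmatrix_classification_existence (β ω m₁ m₂ m₃ m₄ : ℝ)
    (hne : rmat m₁ m₂ m₃ m₄ ≠ 0)
    (hyb : SatGCYBE (Rop β m₁ m₂ m₃ m₄) ω) :
    REquiv (rmat m₁ m₂ m₃ m₄) (rmat 1 0 0 0) ∨
    REquiv (rmat m₁ m₂ m₃ m₄) (rmat 0 0 1 1) ∨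
    REquiv (rmat m₁ m₂ m₃ m₄) (rmat 0 0 (-1) (-1)) ∨
    (∃ p : ℝ, p ≠ 0 ∧ REquiv (rmat m₁ m₂ m₃ m₄) (rmat 1 0 p p)) ∨
    REquiv (rmat m₁ m₂ m₃ m₄) (rmat 0 1 0 0) := by
  -- Extract the three polynomial constraints from the Yang–Baxter equation.
  have hA := congrFun (hyb ![0,0,1,0] ![0,0,1,0]) 1
  have hB := congrFun (hyb ![0,0,0,1] ![0,0,0,1]) 1
  have hC := congrFun (hyb ![0,0,1,0] ![0,0,0,1]) 1
  simp only [Rop_apply, brC5, Pi.sub_apply, Pi.add_apply, Pi.smul_apply, smul_eq_mul] at hA hB hC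
  simp [Matrix.cons_val_zero, Matrix.cons_val_one, Matrix.head_cons] at hA hB hC
  have hE : m₄^2 - m₃^2 + 4*m₁*m₂ = 0 := by linear_combination hA - hB
  have hC' : m₁*(m₄ - m₃) - m₂*(m₃+m₄) = 0 := by linear_combination hC
  clear hA hB hC hyb
  by_cases hm1 : m₁ = 0
  · -- the case `m₁ = 0`
    subst hm1
    by_cases h43 : m₄ = -m₃
    · -- the case `m₄ = -m₃` : equivalent to `r_v`
      subst h43
      have hne' : ¬(m₂ = 0 ∧ m₃ = 0) := by
        rintro ⟨rfl, rfl⟩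
        exact hne (by simpa using rmat_zero)
      obtain ⟨z, hz⟩ := IsAlgClosed.exists_pow_nat_eq ((m₂ : ℂ) - (m₃ : ℂ)*Complex.I) (n := 2)
        (by norm_num)
      set p := z.re with hp
      set q := z.im with hq
      have hre : p^2 - q^2 = m₂ := by
        have := congrArg Complex.re hz
        simp [sq, Complex.mul_re, Complex.mul_im] at this
        linear_combination this
      have him : 2*p*q = -m₃ := by
        have := congrArg Complex.im hz
        simp [sq, Complex.mul_re, Complex.mul_im] at this
        linear_combination this
      have hd : p^2 + q^2 ≠ 0 := by
        intro h
        have hp0 : p = 0 := by nlinarith [sq_nonneg p, sq_nonneg q]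
        have hq0 : q = 0 := by nlinarith [sq_nonneg p, sq_nonneg q]
        exact hne' ⟨by nlinarith, by nlinarith⟩
      refine Or.inr (Or.inr (Or.inr (Or.inr ?_)))
      exact requiv_of 1 p q 0 1 0 0 0 m₂ m₃ (-m₃) (Or.inl rfl) hd
        (by ring) (by linear_combination hre) (by linear_combination -him)
        (by linear_combination him)
    · -- the case `m₄ ≠ -m₃` : then `m₄ = m₃ ≠ 0` and `m₂ = 0`
      have hsum : m₃ + m₄ ≠ 0 := fun h => h43 (by linarith)
      have h44 : (m₄ - m₃) * (m₄ + m₃) = 0 := by linear_combination hE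
      have h43' : m₄ = m₃ := by
        rcases mul_eq_zero.mp h44 with h | h
        · linarith
        · exact absurd (by linarith : m₄ = -m₃) h43
      subst h43'
      have hm3 : m₄ ≠ 0 := by
        intro h; exact h43 (by rw [h]; ring)
      have hm2 : m₂ = 0 := by
        have : m₂ * (m₄ + m₄) = 0 := by linear_combination -hC'
        rcases mul_eq_zero.mp this with h | h
        · exact h
        · exact absurd h hsum
      subst hm2
      rcases lt_or_gt_of_ne hm3 with h | h
      · -- `m₄ < 0` : equivalent to `r_iii`
        refine Or.inr (Or.inr (Or.inl ?_))
        have hp2 : Real.sqrt (-m₄) ^ 2 = -m₄ := Real.sq_sqrt (by linarith)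
        refine requiv_of 1 (Real.sqrt (-m₄)) 0 0 0 (-1) (-1) 0 0 m₄ m₄ (Or.inl rfl)
          (by rw [hp2]; intro hh; nlinarith) (by ring) (by ring)
          (by linear_combination -hp2) (by linear_combination -hp2)
      · -- `m₄ > 0` : equivalent to `r_ii`
        refine Or.inr (Or.inl ?_)
        have hp2 : Real.sqrt m₄ ^ 2 = m₄ := Real.sq_sqrt (by linarith)
        refine requiv_of 1 (Real.sqrt m₄) 0 0 0 1 1 0 0 m₄ m₄ (Or.inl rfl)
          (by rw [hp2]; intro hh; nlinarith) (by ring) (by ring)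
          (by linear_combination hp2) (by linear_combination hp2)
  · -- the case `m₁ ≠ 0` : then `m₂ = 0`, `m₄ = m₃`
    have hm2 : m₂ = 0 := by
      have key : m₂ * (4*m₁^2 + (m₃+m₄)^2) = 0 := by
        linear_combination m₁*hE - (m₄+m₃)*hC'
      rcases mul_eq_zero.mp key with h | h
      · exact h
      · exact absurd h (by positivity)
    subst hm2
    have h43 : m₄ = m₃ := by
      have : m₁ * (m₄ - m₃) = 0 := by linear_combination hC'
      rcases mul_eq_zero.mp this with h | h
      · exact absurd h hm1
      · linarith
    subst h43
    obtain ⟨a, ha, ham⟩ : ∃ a : ℝ, (a = 1 ∨ a = -1) ∧ 0 < a * m₁ := by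
      rcases lt_or_gt_of_ne hm1 with h | h
      · exact ⟨-1, Or.inr rfl, by nlinarith⟩
      · exact ⟨1, Or.inl rfl, by nlinarith⟩
    have ha2 : a^2 = 1 := by rcases ha with rfl | rfl <;> norm_num
    have hp2 : Real.sqrt (a*m₁) ^ 2 = a*m₁ := Real.sq_sqrt ham.le
    have hd : Real.sqrt (a*m₁)^2 + (0:ℝ)^2 ≠ 0 := by rw [hp2]; intro hh; nlinarith
    by_cases hm3 : m₄ = 0
    · -- equivalent to `r_i`
      subst hm3
      refine Or.inl (requiv_of a (Real.sqrt (a*m₁)) 0 1 0 0 0 m₁ 0 0 0 ha hd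
        (by linear_combination a*hp2 + m₁*ha2) (by ring) (by ring) (by ring))
    · -- equivalent to `r_iv (a*m₄/m₁)`
      refine Or.inr (Or.inr (Or.inr (Or.inl ⟨a*m₄/m₁, ?_, ?_⟩)))
      · apply div_ne_zero _ hm1
        apply mul_ne_zero _ hm3
        rcases ha with rfl | rfl <;> norm_num
      · refine requiv_of a (Real.sqrt (a*m₁)) 0 1 0 (a*m₄/m₁) (a*m₄/m₁) m₁ 0 m₄ m₄ ha hd
          (by linear_combination a*hp2 + m₁*ha2) (by ring) ?_ ?_
        · field_simp
          linear_combination a*m₄*hp2 + m₄*m₁*ha2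
        · field_simp
          linear_combination a^3*m₄*hp2 + m₄*m₁*(a^2+1)*ha2
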